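/- Let Γ be a δ-hyperbolic connected graph and let 𝓗 be a factor system for Γ. Then for each θ > 0 there exists T_θ (depending on θ, δ and the factor-system constants) such that: if x, y ∈ Γ and d_Γ(x,y) ≥ T_θ, then there exists V ∈ 𝓗 ∪ {Γ} with d_{V̂}(π_V(x), π_V(y)) ≥ θ (uniqueness axiom). -/

import Mathlib

universe u

open SimpleGraph

/-- The cone-off of a graph `G` with respect to a family `𝓗` of (vertex sets of)
subgraphs: an edge is added between each pair of distinct vertices of each `S ∈ 𝓗`. -/
def coneOff {V : Type u} (G : SimpleGraph V) (𝓗 : Set (Set V)) : SimpleGraph V where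
  Adj a b := G.Adj a b ∨ (a ≠ b ∧ ∃ S ∈ 𝓗, a ∈ S ∧ b ∈ S)
  symm := by
    constructor
    intro a b hab
    rcases hab with h | ⟨hne, S, hS, ha, hb⟩
    · exact Or.inl h.symm
    · exact Or.inr ⟨hne.symm, S, hS, hb, ha⟩
  loopless := by
    constructor
    intro a ha
    rcases ha with h | ⟨hne, -⟩
    · exact G.irrefl h
    · exact hne rfl

/-- `δ`-hyperbolicity of a graph via `δ`-slim geodesic triangles
(geodesics being shortest-path walks). -/
def GraphHyperbolic {V : Type u} (G : SimpleGraph V) (δ : ℝ) : Prop :=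
  ∀ (x y z : V) (p : G.Walk x y) (q : G.Walk y z) (r : G.Walk x z),
    p.length = G.dist x y → q.length = G.dist y z → r.length = G.dist x z →
    ∀ v ∈ r.support, ∃ w, (w ∈ p.support ∨ w ∈ q.support) ∧ (G.dist v w : ℝ) ≤ δ

/-- A de-electrification datum: `g` is a `G`-walk obtained from the walk `γ` of the
cone-off by replacing each `𝓗`-component (the edges indexed by `C`) by a `G`-geodesic
between its endpoints; `φ` maps positions along `γ` to positions along `g`. -/
def IsDeelectrification {V : Type u} (G : SimpleGraph V) (𝓗 : Set (Set V)) {x y : V}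
    (γ : (coneOff G 𝓗).Walk x y) (g : G.Walk x y) (φ : ℕ → ℕ) (C : Set ℕ) : Prop :=
  φ 0 = 0 ∧ φ γ.length = g.length ∧
    (∀ i ≤ γ.length, g.getVert (φ i) = γ.getVert i) ∧
    (∀ i < γ.length, i ∈ C →
      (∃ S ∈ 𝓗, γ.getVert i ∈ S ∧ γ.getVert (i + 1) ∈ S) ∧
      φ (i + 1) = φ i + G.dist (γ.getVert i) (γ.getVert (i + 1))) ∧
    (∀ i < γ.length, i ∉ C →
      G.Adj (γ.getVert i) (γ.getVert (i + 1)) ∧ φ (i + 1) = φ i + 1)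

/-- The cone-off `Ŵ` of (the subgraph induced on) `W` with respect to the family
`𝓗_W = {U ∈ 𝓗 | U ⊊ W}`, realized as a graph on the ambient vertex set (vertices
outside `W` are isolated). -/
def hatG {V : Type u} (G : SimpleGraph V) (𝓗 : Set (Set V)) (W : Set V) : SimpleGraph V where
  Adj a b := a ∈ W ∧ b ∈ W ∧
    (G.Adj a b ∨ (a ≠ b ∧ ∃ U ∈ 𝓗, U ⊂ W ∧ a ∈ U ∧ b ∈ U))
  symm := by
    constructor
    intro a b hab
    obtain ⟨ha, hb, h | ⟨hne, U, hU, hUW, haU, hbU⟩⟩ := hab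
    · exact ⟨hb, ha, Or.inl h.symm⟩
    · exact ⟨hb, ha, Or.inr ⟨hne.symm, U, hU, hUW, hbU, haU⟩⟩
  loopless := by
    constructor
    intro a ha
    obtain ⟨-, -, h | ⟨hne, -⟩⟩ := ha
    · exact G.irrefl h
    · exact hne rfl

/-- Closest-point projection (in the graph metric of `G`) of the vertex `x` to `W`. -/
def gProjSet {V : Type u} (G : SimpleGraph V) (W : Set V) (x : V) : Set V :=
  {w ∈ W | ∀ w' ∈ W, G.dist x w ≤ G.dist x w'}

/-- Closest-point projection (in the graph metric of `G`) of the set `S` to `W`. -/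
def gProjSetOf {V : Type u} (G : SimpleGraph V) (W S : Set V) : Set V :=
  ⋃ s ∈ S, gProjSet G W s

/-- The Hausdorff distance between `S` and `T` in the graph metric of `G` is at most `d`. -/
def GHausBound {V : Type u} (G : SimpleGraph V) (d : ℝ) (S T : Set V) : Prop :=
  (∀ s ∈ S, ∃ t ∈ T, (G.dist s t : ℝ) ≤ d) ∧
  (∀ t ∈ T, ∃ s ∈ S, (G.dist t s : ℝ) ≤ d)

/-- A factor system `𝓗` for the graph `G`, with constants `K, c, ξ, B`
(Definition 3.1). -/
structure FactorSystem {V : Type u} (G : SimpleGraph V) (𝓗 : Set (Set V))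
    (K : ℝ) (c : ℕ) (ξ B : ℝ) : Prop where
  connected : ∀ W ∈ 𝓗, (G.induce W).Connected
  qie : ∀ (W : Set V), W ∈ 𝓗 → ∀ (u v : V) (hu : u ∈ W) (hv : v ∈ W),
    ((G.induce W).dist ⟨u, hu⟩ ⟨v, hv⟩ : ℝ) ≤ K * (G.dist u v : ℝ) + K
  proj : ∀ W₁ ∈ 𝓗, ∀ W₂ ∈ 𝓗,
    (∀ p ∈ gProjSetOf G W₁ W₂, ∀ q ∈ gProjSetOf G W₁ W₂, (G.dist p q : ℝ) ≤ ξ) ∨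
    ∃ U ∈ 𝓗, U ⊆ W₁ ∧ GHausBound G B (gProjSetOf G W₁ W₂) U
  deep : ∀ W₁ ∈ 𝓗, ∀ W₂ ∈ 𝓗,
    GHausBound G B (gProjSetOf G W₁ W₂) W₁ → W₁ ⊆ W₂
  chains : ∀ (n : ℕ) (f : Fin (n + 1) → Set V), (∀ i, f i ∈ 𝓗) →
    (∀ i : Fin n, f i.castSucc ⊂ f i.succ) → n + 1 ≤ c
  rigid : ∀ W₁ ∈ 𝓗, ∀ W₂ ∈ 𝓗, (∃ d : ℝ, GHausBound G d W₁ W₂) → W₁ = W₂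


namespace FSAux

variable {V : Type*} {H : SimpleGraph V}

/-- Take the first `n` darts of a walk. -/
def wtake {u v : V} : (p : H.Walk u v) → (n : ℕ) → H.Walk u (p.getVert n)
  | Walk.nil, _ => Walk.nil
  | Walk.cons h q, 0 => Walk.nil.copy rfl ((Walk.cons h q).getVert_zero).symm
  | Walk.cons h q, (n+1) => (Walk.cons h (wtake q n)).copy rfl rfl

@[simp] lemma wtake_length {u v : V} (p : H.Walk u v) (n : ℕ) :
    (wtake p n).length = min n p.length := by
  induction p generalizing n with
  | nil => simp [wtake]
  | cons h q ih =>
    cases n with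
    | zero => simp [wtake]
    | succ n => simp [wtake, ih, Nat.succ_min_succ]

lemma wtake_getVert {u v : V} (p : H.Walk u v) (n i : ℕ) (hi : i ≤ n) :
    (wtake p n).getVert i = p.getVert i := by
  induction p generalizing n i with
  | nil => simp [wtake]
  | cons h q ih =>
    cases n with
    | zero => interval_cases i; simp [wtake]
    | succ n =>
      cases i with
      | zero => simp [wtake]
      | succ i =>
        simp only [wtake, Walk.getVert_copy, Walk.getVert_cons_succ]
        exact ih n i (Nat.succ_le_succ_iff.mp hi)

lemma wtake_support_subset {u v : V} (p : H.Walk u v) (n : ℕ) :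
    (wtake p n).support ⊆ p.support := by
  induction p generalizing n with
  | nil => simp [wtake]
  | cons h q ih =>
    cases n with
    | zero =>
      intro z hz
      simp [wtake] at hz
      simp [hz]
    | succ n =>
      intro z hz
      simp only [wtake] at hz
      change z ∈ (Walk.cons h (wtake q n)).support at hz
      simp only [Walk.support_cons, List.mem_cons] at hz
      rcases hz with hz | hz
      · simp [hz]
      · exact List.mem_cons_of_mem _ (ih n hz)

lemma wdrop_length {u v : V} (p : H.Walk u v) (n : ℕ) :
    (p.drop n).length = p.length - n := by
  induction p generalizing n with
  | nil => simp [Walk.drop]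
  | cons h q ih =>
    cases n with
    | zero => simp [Walk.drop]
    | succ n => simp [Walk.drop, ih]

lemma wdrop_getVert {u v : V} (p : H.Walk u v) (n i : ℕ) :
    (p.drop n).getVert i = p.getVert (n + i) := by
  induction p generalizing n i with
  | nil => cases n <;> rfl
  | cons h q ih =>
    cases n with
    | zero => simp [Walk.drop]
    | succ n =>
      simp only [Walk.drop, Walk.getVert_copy]
      exact (ih n i).trans (by rw [show n + 1 + i = (n + i) + 1 by omega, Walk.getVert_cons_succ])

lemma wdrop_support_subset {u v : V} (p : H.Walk u v) (n : ℕ) :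
    (p.drop n).support ⊆ p.support := by
  induction p generalizing n with
  | nil => cases n <;> exact fun z hz => hz
  | cons h q ih =>
    cases n with
    | zero => simp [Walk.drop]
    | succ n =>
      intro z hz
      simp only [Walk.drop, Walk.support_copy] at hz
      exact List.mem_cons_of_mem _ (ih n hz)

/-- The subwalk of `p` between positions `i` and `j`. -/
def subwalk {u v : V} (p : H.Walk u v) (i j : ℕ) (hij : i ≤ j) :
    H.Walk (p.getVert i) (p.getVert j) :=
  (wtake (p.drop i) (j - i)).copy rfl (by rw [wdrop_getVert, Nat.add_sub_cancel' hij])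

lemma subwalk_length {u v : V} (p : H.Walk u v) (i j : ℕ) (hij : i ≤ j) (hj : j ≤ p.length) :
    (subwalk p i j hij).length = j - i := by
  simp [subwalk, wdrop_length]
  omega

lemma subwalk_getVert {u v : V} (p : H.Walk u v) (i j m : ℕ) (hij : i ≤ j) (hm : m ≤ j - i) :
    (subwalk p i j hij).getVert m = p.getVert (i + m) := by
  simp only [subwalk, Walk.getVert_copy]
  rw [wtake_getVert _ _ _ hm, wdrop_getVert]

lemma subwalk_support_subset {u v : V} (p : H.Walk u v) (i j : ℕ) (hij : i ≤ j) :
    (subwalk p i j hij).support ⊆ p.support := by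
  simp only [subwalk, Walk.support_copy]
  exact List.Subset.trans (wtake_support_subset _ _) (wdrop_support_subset _ _)

lemma geodesic_getVert_dist {u v : V} (p : H.Walk u v) (hp : p.length = H.dist u v)
    {i j : ℕ} (hij : i ≤ j) (hj : j ≤ p.length) :
    H.dist (p.getVert i) (p.getVert j) = j - i := by
  have hle : H.dist (p.getVert i) (p.getVert j) ≤ j - i := by
    have := SimpleGraph.dist_le (subwalk p i j hij)
    rwa [subwalk_length p i j hij hj] at this
  refine le_antisymm hle ?_
  obtain ⟨q, hq⟩ := (subwalk p i j hij).reachable.exists_walk_length_eq_dist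
  have h1 : H.dist u v ≤ i + H.dist (p.getVert i) (p.getVert j) + (p.length - j) := by
    have := SimpleGraph.dist_le
      ((((subwalk p 0 i (Nat.zero_le i)).copy (p.getVert_zero) rfl).append q).append
        ((subwalk p j p.length hj).copy rfl (p.getVert_length)))
    simp only [Walk.length_append, Walk.length_copy] at this
    rw [subwalk_length p 0 i (Nat.zero_le i) (hij.trans hj),
      subwalk_length p j p.length hj le_rfl, hq] at this
    omega
  omega

lemma dist_start_of_mem_support {u v z : V} (p : H.Walk u v) (hz : z ∈ p.support) :
    H.dist u z ≤ p.length := by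
  obtain ⟨n, hn, hnl⟩ := Walk.mem_support_iff_exists_getVert.mp hz
  have := SimpleGraph.dist_le ((subwalk p 0 n (Nat.zero_le n)).copy (p.getVert_zero) hn)
  rw [Walk.length_copy, subwalk_length p 0 n (Nat.zero_le n) hnl] at this
  omega

lemma dist_end_of_mem_support {u v z : V} (p : H.Walk u v) (hz : z ∈ p.support) :
    H.dist z v ≤ p.length := by
  have := dist_start_of_mem_support p.reverse (by simpa using hz)
  rwa [SimpleGraph.dist_comm, Walk.length_reverse] at this

/-- On a geodesic from `u`, distance to `u` of the `m`-th vertex is `m`. -/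
lemma geodesic_dist_getVert {u v : V} (p : H.Walk u v) (hp : p.length = H.dist u v)
    {m : ℕ} (hm : m ≤ p.length) : H.dist u (p.getVert m) = m := by
  have := geodesic_getVert_dist p hp (Nat.zero_le m) hm
  simpa using this

lemma geodesic_getVert_dist_end {u v : V} (p : H.Walk u v) (hp : p.length = H.dist u v)
    {m : ℕ} (hm : m ≤ p.length) : H.dist (p.getVert m) v = p.length - m := by
  have := geodesic_getVert_dist p hp hm le_rfl
  rwa [p.getVert_length] at this

section Hyperbolic

variable {G : SimpleGraph V} {δ : ℝ}

lemma bisect (hδ : 0 ≤ δ) (hconn : G.Connected) (hhyp : GraphHyperbolic G δ) :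
    ∀ (n : ℕ) {a b : V} (P : G.Walk a b), P.length = n →
      ∀ (r : G.Walk a b), r.length = G.dist a b →
        ∀ z ∈ r.support, ∃ w ∈ P.support, (G.dist z w : ℝ) ≤ δ * (Nat.clog 2 n + 1) := by
  intro n
  induction n using Nat.strong_induction_on with
  | _ n IH =>
    intro a b P hP r hr z hz
    rcases le_or_gt n 1 with hn | hn
    · -- short case
      obtain ⟨m, hm, hml⟩ := Walk.mem_support_iff_exists_getVert.mp hz
      have hrl : r.length ≤ 1 := by
        have := SimpleGraph.dist_le P
        omega
      have hm2 : m ≤ 1 := le_trans hml hrl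
      have hz2 : z = a ∨ z = b := by
        interval_cases m
        · exact Or.inl (by rw [← hm, r.getVert_zero])
        · exact Or.inr (by rw [← hm, r.getVert_of_length_le hrl])
      have hge : (0:ℝ) ≤ δ * (Nat.clog 2 n + 1) := by positivity
      rcases hz2 with h | h
      · exact ⟨a, P.start_mem_support, by simpa [h, SimpleGraph.dist_self] using hge⟩
      · exact ⟨b, P.end_mem_support, by simpa [h, SimpleGraph.dist_self] using hge⟩
    · -- split
      set m := (n + 1) / 2 with hm
      have hm1 : 1 ≤ m := by omega
      have hmn : m < n := by omega
      have hPl : m ≤ P.length := by omega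
      set mid := P.getVert m with hmid
      obtain ⟨g₁, hg₁⟩ := (hconn a mid).exists_walk_length_eq_dist
      obtain ⟨g₂, hg₂⟩ := (hconn mid b).exists_walk_length_eq_dist
      obtain ⟨w', hw', hdw'⟩ := hhyp a mid b g₁ g₂ r hg₁ hg₂ hr z hz
      have hclog : Nat.clog 2 m + 1 = Nat.clog 2 n := by
        rw [Nat.clog_of_two_le (by norm_num) hn, show (n + 2 - 1) / 2 = m by omega]
      have key : ∀ w'' : V, (∃ w ∈ P.support, (G.dist w'' w : ℝ) ≤ δ * (Nat.clog 2 m + 1)) →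
          (G.dist z w'' : ℝ) ≤ δ → ∃ w ∈ P.support, (G.dist z w : ℝ) ≤ δ * (Nat.clog 2 n + 1) := by
        rintro w'' ⟨w, hwP, hdist⟩ hzw
        refine ⟨w, hwP, ?_⟩
        have htri : (G.dist z w : ℝ) ≤ (G.dist z w'' : ℝ) + (G.dist w'' w : ℝ) := by
          exact_mod_cast hconn.dist_triangle
        rw [← hclog]
        push_cast
        push_cast at hdist
        linarith
      rcases hw' with hw' | hw'
      · -- w' on geodesic to mid; compare with wtake P m
        have hres := IH m hmn (wtake P m) (by simp [wtake_length]; omega) g₁ hg₁ w' hw'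
        obtain ⟨w, hwP, hdist⟩ := hres
        exact key w' ⟨w, wtake_support_subset P m hwP, hdist⟩ hdw'
      · -- w' on geodesic from mid
        have hlen2 : (P.drop m).length = n - m := by rw [wdrop_length]; omega
        have hres := IH (n - m) (by omega) (P.drop m) hlen2 g₂ hg₂ w' hw'
        obtain ⟨w, hwP, hdist⟩ := hres
        refine key w' ⟨w, wdrop_support_subset P m hwP, ?_⟩ hdw'
        refine hdist.trans ?_
        have : Nat.clog 2 (n - m) ≤ Nat.clog 2 m := Nat.clog_mono_right 2 (by omega)
        have h2 : (Nat.clog 2 (n-m) : ℝ) ≤ (Nat.clog 2 m : ℝ) := by exact_mod_cast this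
        nlinarith
  
lemma broken (hδ : 0 ≤ δ) (hconn : G.Connected) (hhyp : GraphHyperbolic G δ) :
    ∀ (k : ℕ), 1 ≤ k → ∀ (cs : ℕ → V) (S : ℕ → Set V),
      (∀ i < k, ∃ p : G.Walk (cs i) (cs (i+1)), p.length = G.dist (cs i) (cs (i+1)) ∧
        ∀ z ∈ p.support, z ∈ S i) →
      ∀ (r : G.Walk (cs 0) (cs k)), r.length = G.dist (cs 0) (cs k) →
        ∀ z ∈ r.support, ∃ i < k, ∃ w ∈ S i, (G.dist z w : ℝ) ≤ δ * k := by
  intro k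
  induction k with
  | zero => omega
  | succ k IH =>
    intro _ cs S hS r hr z hz
    rcases Nat.eq_zero_or_pos k with hk | hk
    · subst hk
      obtain ⟨p, hp, hpS⟩ := hS 0 (by norm_num)
      have hnil : (Walk.nil : G.Walk (cs 1) (cs 1)).length = G.dist (cs 1) (cs 1) := by
        simp [SimpleGraph.dist_self]
      obtain ⟨w, hw, hdw⟩ := hhyp (cs 0) (cs 1) (cs 1) p Walk.nil r hp hnil hr z hz
      rcases hw with hw | hw
      · exact ⟨0, by norm_num, w, hpS w hw, by simpa using hdw⟩
      · simp only [Walk.support_nil, List.mem_singleton] at hw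
        subst hw
        exact ⟨0, by norm_num, cs 1, hpS _ p.end_mem_support, by simpa using hdw⟩
    · obtain ⟨p₀, hp₀, hp₀S⟩ := hS 0 (by omega)
      obtain ⟨h, hh⟩ := (hconn (cs 1) (cs (k+1))).exists_walk_length_eq_dist
      obtain ⟨w', hw', hdw'⟩ := hhyp (cs 0) (cs 1) (cs (k+1)) p₀ h r hp₀ hh hr z hz
      have hδk : (0:ℝ) ≤ δ * k := by positivity
      rcases hw' with hw' | hw'
      · refine ⟨0, by omega, w', hp₀S w' hw', ?_⟩
        have hk0 : (0:ℝ) ≤ (k:ℝ) := Nat.cast_nonneg k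
        push_cast
        nlinarith
      · obtain ⟨i, hik, w, hwS, hdw⟩ := IH hk (fun j => cs (j+1)) (fun j => S (j+1))
          (fun i hi => hS (i+1) (by omega)) h hh w' hw'
        refine ⟨i + 1, by omega, w, hwS, ?_⟩
        have htri : (G.dist z w : ℝ) ≤ (G.dist z w' : ℝ) + (G.dist w' w : ℝ) := by
          exact_mod_cast hconn.dist_triangle
        push_cast
        push_cast at hdw
        linarith

end Hyperbolic

lemma sq_le_pow : ∀ n : ℕ, (n+1)^2 + 1 ≤ 2^(n+3) := by
  intro n
  induction n with
  | zero => norm_num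
  | succ n ih =>
    rcases Nat.eq_zero_or_pos n with h | h
    · subst h; norm_num
    · have h2 : (n+1+1)^2 + 1 ≤ 2*((n+1)^2 + 1) := by nlinarith
      calc (n+1+1)^2 + 1 ≤ 2*((n+1)^2+1) := h2
        _ ≤ 2 * 2^(n+3) := by omega
        _ = 2^(n+1+3) := by ring

/-- The Morse quasiconvexity constant. -/
noncomputable def Qval (δ K : ℝ) : ℝ := δ * (16*(6*K+2)*δ + 8*K + 3) + δ + 1

lemma Qval_pos {δ K : ℝ} (hδ : 0 < δ) (hK : 0 ≤ K) : 0 < Qval δ K := by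
  unfold Qval; positivity

lemma qnum (δ K : ℝ) (hδ : 0 < δ) (hK : 0 ≤ K) (D L : ℕ)
    (h1 : (D:ℝ) ≤ δ * (Nat.clog 2 L + 1)) (h2 : (L:ℝ) ≤ (6*K+2)*(D:ℝ) + K) :
    (D:ℝ) ≤ Qval δ K := by
  have hQ0 : 0 ≤ δ * (16*(6*K+2)*δ + 8*K + 3) := by positivity
  rcases le_or_gt L 1 with hL | hL
  · have h0 : Nat.clog 2 L = 0 := Nat.clog_of_right_le_one hL 2
    rw [h0] at h1
    unfold Qval
    push_cast at h1
    linarith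
  · set t := Nat.clog 2 L with ht
    have ht1 : 1 ≤ t := Nat.clog_pos (by norm_num) hL
    have hpow : (2:ℕ)^(t-1) < L := Nat.pow_pred_clog_lt_self (by norm_num) hL
    set s := t - 1 with hs
    have hts : t = s + 1 := by omega
    have hsq : ((s:ℝ)+1)^2 ≤ 8 * (2:ℝ)^s := by
      have h3 := sq_le_pow s
      have hc : (((s+1)^2 + 1 : ℕ) : ℝ) ≤ ((2^(s+3) : ℕ) : ℝ) := Nat.cast_le.mpr h3
      push_cast at hc
      have h8 : (2:ℝ)^(s+3) = 8 * (2:ℝ)^s := by ring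
      nlinarith [hc]
    have hpowR : (2:ℝ)^s < (L:ℝ) := by exact_mod_cast hpow
    have h1' : (D:ℝ) ≤ δ * ((s:ℝ)+2) := by
      rw [hts] at h1
      push_cast at h1
      nlinarith [h1]
    have hs0 : (0:ℝ) ≤ (s:ℝ) := Nat.cast_nonneg s
    have hkey : ((s:ℝ)+1)^2 < 8*(6*K+2)*(δ*((s:ℝ)+2)) + 8*K := by
      have h4 : (2:ℝ)^s ≤ (6*K+2)*(D:ℝ) + K := le_of_lt (lt_of_lt_of_le hpowR h2)
      nlinarith [hsq, h4, h1']
    have hxb : (s:ℝ) + 1 ≤ 16*(6*K+2)*δ + 8*K + 1 := by nlinarith [hkey, hs0]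
    have hfin : (D:ℝ) ≤ δ * (16*(6*K+2)*δ + 8*K + 3) := by nlinarith [h1', hxb]
    unfold Qval
    linarith

section Morse

variable {G : SimpleGraph V} {δ : ℝ}

/-- `P` is a discrete `(K,K)`-quasigeodesic walk. -/
def QG (G : SimpleGraph V) (K : ℝ) {a b : V} (P : G.Walk a b) : Prop :=
  ∀ i j : ℕ, i ≤ j → j ≤ P.length →
    ((j - i : ℕ) : ℝ) ≤ K * (G.dist (P.getVert i) (P.getVert j) : ℝ) + K

lemma morse (hδ : 0 < δ) (hconn : G.Connected) (hhyp : GraphHyperbolic G δ)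
    {K : ℝ} (hK : 0 ≤ K) {a b : V} (P : G.Walk a b) (hP : QG G K P)
    (r : G.Walk a b) (hr : r.length = G.dist a b) :
    ∀ z ∈ r.support, ∃ w ∈ P.support, (G.dist z w : ℝ) ≤ Qval δ K := by
  classical
  have hPne : P.support.toFinset.Nonempty := ⟨a, by simp⟩
  have hrne : r.support.toFinset.Nonempty := ⟨a, by simp⟩
  set dP : V → ℕ := fun z => P.support.toFinset.inf' hPne (G.dist z) with hdP
  have dP_le : ∀ (z w : V), w ∈ P.support → dP z ≤ G.dist z w := fun z w hw =>
    Finset.inf'_le _ (List.mem_toFinset.mpr hw)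
  have dP_spec : ∀ z : V, ∃ w ∈ P.support, dP z = G.dist z w := by
    intro z
    obtain ⟨w, hw, hw2⟩ := Finset.exists_mem_eq_inf' hPne (G.dist z)
    exact ⟨w, List.mem_toFinset.mp hw, hw2⟩
  set D : ℕ := r.support.toFinset.sup' hrne dP with hD
  have hDle : ∀ z ∈ r.support, dP z ≤ D := fun z hz =>
    Finset.le_sup' _ (List.mem_toFinset.mpr hz)
  suffices hDQ : (D:ℝ) ≤ Qval δ K by
    intro z hz
    obtain ⟨w, hw, hw2⟩ := dP_spec z
    refine ⟨w, hw, ?_⟩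
    have h5 := hDle z hz
    have h6 : (dP z : ℝ) ≤ (D : ℝ) := by exact_mod_cast h5
    rw [← hw2]
    linarith
  -- pick the vertex realizing the sup
  obtain ⟨z₀, hz₀t, hz₀⟩ := Finset.exists_mem_eq_sup' hrne dP
  have hz₀r : z₀ ∈ r.support := List.mem_toFinset.mp hz₀t
  obtain ⟨m, hm, hml⟩ := Walk.mem_support_iff_exists_getVert.mp hz₀r
  set mlo : ℕ := m - 2*D with hmlo
  set mhi : ℕ := min (m + 2*D) r.length with hmhi
  have hmm1 : mlo ≤ m := by omega
  have hmm2 : m ≤ mhi := by omega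
  have hmm3 : mhi ≤ r.length := by omega
  set zlo := r.getVert mlo with hzlo
  set zhi := r.getVert mhi with hzhi
  have hzlor : zlo ∈ r.support := Walk.mem_support_iff_exists_getVert.mpr ⟨mlo, rfl, by omega⟩
  have hzhir : zhi ∈ r.support := Walk.mem_support_iff_exists_getVert.mpr ⟨mhi, rfl, by omega⟩
  obtain ⟨plo, hploP, hdplo⟩ := dP_spec zlo
  obtain ⟨phi, hphiP, hdphi⟩ := dP_spec zhi
  obtain ⟨klo, hklo, hklol⟩ := Walk.mem_support_iff_exists_getVert.mp hploP
  obtain ⟨khi, hkhi, hkhil⟩ := Walk.mem_support_iff_exists_getVert.mp hphiP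
  subst hklo
  subst hkhi
  -- middle piece of P
  have hmidspec : ∃ mid : G.Walk (P.getVert klo) (P.getVert khi),
      (∀ w ∈ mid.support, w ∈ P.support) ∧
      (mid.length : ℝ) ≤ K * (G.dist (P.getVert klo) (P.getVert khi) : ℝ) + K := by
    rcases le_or_gt klo khi with h | h
    · refine ⟨subwalk P klo khi h, fun w hw => subwalk_support_subset P klo khi h hw, ?_⟩
      rw [subwalk_length P klo khi h hkhil]
      exact hP klo khi h hkhil
    · refine ⟨(subwalk P khi klo h.le).reverse,
        fun w hw => subwalk_support_subset P khi klo h.le (by simpa using hw), ?_⟩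
      rw [Walk.length_reverse, subwalk_length P khi klo h.le hklol,
        SimpleGraph.dist_comm]
      exact hP khi klo h.le hklol
  obtain ⟨mid, hmidsup, hmidlen⟩ := hmidspec
  obtain ⟨glo, hglo⟩ := (hconn zlo (P.getVert klo)).exists_walk_length_eq_dist
  obtain ⟨ghi, hghi⟩ := (hconn (P.getVert khi) zhi).exists_walk_length_eq_dist
  set π : G.Walk zlo zhi := glo.append (mid.append ghi) with hπ
  -- distances along r
  have hd1 : G.dist zlo z₀ = m - mlo := by
    rw [hzlo, ← hm]
    exact geodesic_getVert_dist r hr hmm1 hml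
  have hd2 : G.dist z₀ zhi = mhi - m := by
    rw [hzhi, ← hm]
    exact geodesic_getVert_dist r hr hmm2 hmm3
  have hDz₀ : dP z₀ = D := hz₀.symm
  -- margins
  have hA : D + dP zlo ≤ m - mlo := by
    rcases le_or_gt (2*D) m with h | h
    · have := hDle _ hzlor
      omega
    · have hmlo0 : mlo = 0 := by omega
      have hzloa : zlo = a := by rw [hzlo, hmlo0, r.getVert_zero]
      have h0 : dP zlo = 0 := by
        have h7 := dP_le zlo a P.start_mem_support
        rw [hzloa] at h7 ⊢
        simpa [SimpleGraph.dist_self] using h7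
      have hDm : D ≤ m := by
        have h8 := dP_le z₀ a P.start_mem_support
        have h9 : G.dist a z₀ = m := by rw [← hm]; exact geodesic_dist_getVert r hr hml
        rw [SimpleGraph.dist_comm] at h9
        omega
      omega
  have hB : D + dP zhi ≤ mhi - m := by
    rcases le_or_gt (m + 2*D) r.length with h | h
    · have := hDle _ hzhir
      omega
    · have hmhil : mhi = r.length := by omega
      have hzhib : zhi = b := by rw [hzhi, hmhil, r.getVert_length]
      have h0 : dP zhi = 0 := by
        have h7 := dP_le zhi b P.end_mem_support
        rw [hzhib] at h7 ⊢
        simpa [SimpleGraph.dist_self] using h7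
      have hDm : D ≤ r.length - m := by
        have h8 := dP_le z₀ b P.end_mem_support
        have h9 : G.dist z₀ b = r.length - m := by
          rw [← hm]; exact geodesic_getVert_dist_end r hr hml
        omega
      omega
  -- π avoids the ball of radius D around z₀
  have hAvoid : ∀ w ∈ π.support, D ≤ G.dist z₀ w := by
    intro w hw
    rw [hπ, Walk.mem_support_append_iff] at hw
    rcases hw with hw | hw
    · have h7 : G.dist zlo w ≤ glo.length := dist_start_of_mem_support glo hw
      rw [hglo, ← hdplo] at h7
      have htr : G.dist zlo z₀ ≤ G.dist zlo w + G.dist w z₀ := hconn.dist_triangle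
      have hcm : G.dist w z₀ = G.dist z₀ w := SimpleGraph.dist_comm ..
      omega
    · rw [Walk.mem_support_append_iff] at hw
      rcases hw with hw | hw
      · have := dP_le z₀ w (hmidsup w hw)
        omega
      · have h7 : G.dist w zhi ≤ ghi.length := dist_end_of_mem_support ghi hw
        rw [hghi] at h7
        have h8 : G.dist (P.getVert khi) zhi = dP zhi := by
          rw [hdphi, SimpleGraph.dist_comm]
        rw [h8] at h7
        have htr : G.dist z₀ zhi ≤ G.dist z₀ w + G.dist w zhi := hconn.dist_triangle
        omega
  -- the subsegment of r around z₀ is a geodesic between zlo and zhi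
  have hr'len : (subwalk r mlo mhi (hmm1.trans hmm2)).length = G.dist zlo zhi := by
    rw [subwalk_length r mlo mhi (hmm1.trans hmm2) hmm3, hzlo, hzhi,
      geodesic_getVert_dist r hr (hmm1.trans hmm2) hmm3]
  have hz₀r' : z₀ ∈ (subwalk r mlo mhi (hmm1.trans hmm2)).support := by
    refine Walk.mem_support_iff_exists_getVert.mpr ⟨m - mlo, ?_, ?_⟩
    · rw [subwalk_getVert r mlo mhi (m - mlo) (hmm1.trans hmm2) (by omega),
        show mlo + (m - mlo) = m by omega, hm]
    · rw [subwalk_length r mlo mhi (hmm1.trans hmm2) hmm3]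
      omega
  obtain ⟨w, hwπ, hwb⟩ := bisect hδ.le hconn hhyp π.length π rfl
    (subwalk r mlo mhi (hmm1.trans hmm2)) hr'len z₀ hz₀r'
  have hDw := hAvoid w hwπ
  have h1 : (D:ℝ) ≤ δ * (Nat.clog 2 π.length + 1) := by
    have : (D:ℝ) ≤ (G.dist z₀ w : ℝ) := by exact_mod_cast hDw
    linarith
  -- length bound for π
  have hπlen : (π.length : ℝ) ≤ (6*K+2)*(D:ℝ) + K := by
    have hLsum : π.length = glo.length + (mid.length + ghi.length) := by
      rw [hπ, Walk.length_append, Walk.length_append]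
    have hgloD : glo.length ≤ D := by
      rw [hglo, ← hdplo]
      exact le_trans (le_of_eq rfl) (by have := hDle _ hzlor; omega)
    have hghiD : ghi.length ≤ D := by
      rw [hghi]
      have h8 : G.dist (P.getVert khi) zhi = dP zhi := by rw [hdphi, SimpleGraph.dist_comm]
      rw [h8]
      have := hDle _ hzhir
      omega
    have hdist : G.dist (P.getVert klo) (P.getVert khi) ≤ 6*D := by
      have t1 : G.dist (P.getVert klo) (P.getVert khi) ≤
          G.dist (P.getVert klo) zlo + G.dist zlo (P.getVert khi) := hconn.dist_triangle
      have t2 : G.dist zlo (P.getVert khi) ≤ G.dist zlo z₀ + G.dist z₀ (P.getVert khi) :=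
        hconn.dist_triangle
      have t3 : G.dist z₀ (P.getVert khi) ≤ G.dist z₀ zhi + G.dist zhi (P.getVert khi) :=
        hconn.dist_triangle
      have c1 : G.dist (P.getVert klo) zlo = dP zlo := by rw [hdplo, SimpleGraph.dist_comm]
      have c2 : G.dist zhi (P.getVert khi) = dP zhi := hdphi ▸ rfl
      have dlo : dP zlo ≤ D := hDle _ hzlor
      have dhi : dP zhi ≤ D := hDle _ hzhir
      omega
    have hmid' : (mid.length : ℝ) ≤ K * (6*D) + K := by
      refine hmidlen.trans ?_
      have : (G.dist (P.getVert klo) (P.getVert khi) : ℝ) ≤ (6*D : ℝ) := by exact_mod_cast hdist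
      nlinarith
    have hcast : (π.length : ℝ) = (glo.length : ℝ) + ((mid.length : ℝ) + (ghi.length : ℝ)) := by
      exact_mod_cast congrArg (Nat.cast : ℕ → ℝ) hLsum
    have elo : (glo.length : ℝ) ≤ (D:ℝ) := by exact_mod_cast hgloD
    have ehi : (ghi.length : ℝ) ≤ (D:ℝ) := by exact_mod_cast hghiD
    rw [hcast]
    linarith
  exact qnum δ K hδ hK D π.length h1 hπlen

end Morse

lemma getVert_map {W' : Type*} {H : SimpleGraph V} {H' : SimpleGraph W'} (f : H →g H')
    {a b : V} (p : H.Walk a b) (i : ℕ) : (p.map f).getVert i = f (p.getVert i) := by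
  induction p generalizing i with
  | nil => rfl
  | cons h q ih =>
    cases i with
    | zero => simp
    | succ i => simpa using ih i

section Induce

variable {G : SimpleGraph V} {U : Set V} {K : ℝ}

/-- Inclusion homomorphism from an induced subgraph. -/
def inclHom (G : SimpleGraph V) (U : Set V) : G.induce U →g G where
  toFun := Subtype.val
  map_rel' := fun h => h

lemma exists_QG_walk (hc : (G.induce U).Connected)
    (hq : ∀ (u v : V) (hu : u ∈ U) (hv : v ∈ U),
      ((G.induce U).dist ⟨u, hu⟩ ⟨v, hv⟩ : ℝ) ≤ K * (G.dist u v : ℝ) + K)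
    {a b : V} (ha : a ∈ U) (hb : b ∈ U) :
    ∃ P : G.Walk a b, QG G K P ∧ ∀ z ∈ P.support, z ∈ U := by
  obtain ⟨p, hp⟩ := (hc ⟨a, ha⟩ ⟨b, hb⟩).exists_walk_length_eq_dist
  refine ⟨p.map (inclHom G U), ?_, ?_⟩
  · intro i j hij hj
    replace hj : j ≤ p.length := le_of_le_of_eq hj (Walk.length_map _ _)
    have h1 : (G.induce U).dist (p.getVert i) (p.getVert j) = j - i :=
      geodesic_getVert_dist p hp hij hj
    have h2 := hq (p.getVert i).1 (p.getVert j).1 (p.getVert i).2 (p.getVert j).2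
    erw [getVert_map, getVert_map]
    refine le_trans ?_ h2
    rw [show (⟨(p.getVert i).1, (p.getVert i).2⟩ : U) = p.getVert i from rfl,
      show (⟨(p.getVert j).1, (p.getVert j).2⟩ : U) = p.getVert j from rfl, h1]
  · intro z hz
    replace hz : z ∈ p.support.map (inclHom G U) := (Walk.support_map (inclHom G U) p) ▸ hz
    obtain ⟨z', hz', rfl⟩ := List.mem_map.mp hz
    exact z'.2

end Induce

section Hat

variable {G : SimpleGraph V} {𝓗 : Set (Set V)} {W : Set V}

lemma hat_adj_iff {a b : V} :
    (hatG G 𝓗 W).Adj a b ↔ a ∈ W ∧ b ∈ W ∧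
      (G.Adj a b ∨ (a ≠ b ∧ ∃ U ∈ 𝓗, U ⊂ W ∧ a ∈ U ∧ b ∈ U)) := Iff.rfl

/-- Inclusion homomorphism from an induced subgraph into the cone-off. -/
def inclHatHom (G : SimpleGraph V) (𝓗 : Set (Set V)) (W : Set V) :
    G.induce W →g hatG G 𝓗 W where
  toFun := Subtype.val
  map_rel' := fun {a b} h => ⟨a.2, b.2, Or.inl h⟩

/-- Inclusion homomorphism into the cone-off of the whole graph. -/
def homHatUniv (G : SimpleGraph V) (𝓗 : Set (Set V)) : G →g hatG G 𝓗 Set.univ where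
  toFun := id
  map_rel' := fun {a b} h => ⟨trivial, trivial, Or.inl h⟩

lemma hat_reachable (hconn : G.Connected) (hW : W ∈ 𝓗 ∨ W = Set.univ)
    (hWc : W ∈ 𝓗 → (G.induce W).Connected) {u v : V} (hu : u ∈ W) (hv : v ∈ W) :
    (hatG G 𝓗 W).Reachable u v := by
  rcases hW with hW | hW
  · obtain ⟨p⟩ := (hWc hW) ⟨u, hu⟩ ⟨v, hv⟩
    exact ⟨p.map (inclHatHom G 𝓗 W)⟩
  · subst hW
    obtain ⟨p⟩ := hconn u v
    exact ⟨p.map (homHatUniv G 𝓗)⟩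

lemma hat_walk_to_G {u v : V} (γ : (hatG G 𝓗 W).Walk u v)
    (hnc : ∀ U ∈ 𝓗, ¬ U ⊂ W) : G.dist u v ≤ γ.length := by
  have he : ∀ e ∈ γ.edges, e ∈ G.edgeSet := by
    intro e he
    induction e with
    | _ x y =>
      have h1 : (hatG G 𝓗 W).Adj x y := γ.adj_of_mem_edges he
      rcases h1.2.2 with h | ⟨_, U', hU', hUW, _⟩
      · exact h
      · exact absurd hUW (hnc U' hU')
  have := SimpleGraph.dist_le (γ.transfer G he)
  rwa [Walk.length_transfer] at this

end Hat

section Main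

/-- radius in the covering argument -/
noncomputable def Rval (δ θ : ℝ) : ℝ := 3*δ + δ*θ

/-- anchor-error constant -/
noncomputable def Eval (δ K θ : ℝ) : ℝ := Rval δ θ + Qval δ (max K 0) + 1

/-- the recursive distance thresholds -/
noncomputable def Tfun (δ K θ : ℝ) : ℕ → ℝ
  | 0 => θ + 2*Eval δ K θ + 6*δ + 10
  | (n+1) => (θ+1)*(Tfun δ K θ n + 2*Rval δ θ + 12) + θ + 2*Eval δ K θ + 6*δ + 10

lemma Rval_pos {δ θ : ℝ} (hδ : 0 < δ) (hθ : 0 < θ) : 0 < Rval δ θ := by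
  unfold Rval; nlinarith

lemma Eval_pos {δ K θ : ℝ} (hδ : 0 < δ) (hθ : 0 < θ) : 0 < Eval δ K θ := by
  have := Qval_pos (K := max K 0) hδ (le_max_right K 0)
  have := Rval_pos hδ hθ
  unfold Eval; linarith

lemma Tfun_ge {δ K θ : ℝ} (hδ : 0 < δ) (hθ : 0 < θ) (n : ℕ) :
    θ + 2*Eval δ K θ + 6*δ + 10 ≤ Tfun δ K θ n := by
  induction n with
  | zero => exact le_of_eq rfl
  | succ n ih =>
    have hE := Eval_pos (K := K) hδ hθ
    have hR := Rval_pos hδ hθ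
    have h1 : 0 ≤ (θ+1)*(Tfun δ K θ n + 2*Rval δ θ + 12) := by nlinarith
    unfold Tfun
    nlinarith

variable {𝓗 : Set (Set V)}

/-- all strict chains in `𝓗` lying strictly below `W` have length at most `n` -/
def heightBound (𝓗 : Set (Set V)) (n : ℕ) (W : Set V) : Prop :=
  ∀ (m : ℕ) (f : Fin (m+1) → Set V), (∀ i, f i ∈ 𝓗) →
    (∀ i : Fin m, f i.castSucc ⊂ f i.succ) → f (Fin.last m) ⊂ W → m + 1 ≤ n

lemma heightBound_zero {W : Set V} (h : heightBound 𝓗 0 W) :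
    ∀ U ∈ 𝓗, ¬ U ⊂ W := by
  intro U hU hUW
  have := h 0 (fun _ => U) (fun _ => hU) (fun i => absurd i.2 (by omega)) hUW
  omega

lemma heightBound_descend {W U : Set V} {n : ℕ} (h : heightBound 𝓗 (n+1) W)
    (hU : U ∈ 𝓗) (hUW : U ⊂ W) : heightBound 𝓗 n U := by
  intro m f hf hch hlast
  have key := h (m+1) (Fin.snoc f U) ?_ ?_ ?_
  · omega
  · intro i
    refine Fin.lastCases ?_ ?_ i
    · rw [Fin.snoc_last]; exact hU
    · intro i₀; rw [Fin.snoc_castSucc]; exact hf i₀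
  · intro i
    refine Fin.lastCases ?_ ?_ i
    · rw [Fin.succ_last, Fin.snoc_last, Fin.snoc_castSucc]
      exact hlast
    · intro i₀
      rw [Fin.succ_castSucc, Fin.snoc_castSucc, Fin.snoc_castSucc]
      exact hch i₀
  · rw [Fin.snoc_last]; exact hUW

end Main

section MainLemma

variable {G : SimpleGraph V} {𝓗 : Set (Set V)} {δ K : ℝ} {c : ℕ} {ξ B θ : ℝ}

lemma gProjSet_mem {W : Set V} {x u : V} (hu : u ∈ gProjSet G W x) :
    u ∈ W ∧ ∀ w' ∈ W, G.dist x u ≤ G.dist x w' := hu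

lemma prelude (hθ : 0 < θ) (hconn : G.Connected)
    (hFS : FactorSystem G 𝓗 K c ξ B) {x y : V} (r₀ : G.Walk x y)
    (hr₀ : r₀.length = G.dist x y)
    {W : Set V} (hW : W ∈ 𝓗 ∨ W = Set.univ)
    {i j : ℕ} (hij : i ≤ j) (hj : j ≤ r₀.length)
    {aw bw : V} (haw : aw ∈ W) (hbw : bw ∈ W)
    (hia : (G.dist (r₀.getVert i) aw : ℝ) ≤ Eval δ K θ)
    (hjb : (G.dist (r₀.getVert j) bw : ℝ) ≤ Eval δ K θ)
    (hbad : ¬ ∀ u ∈ gProjSet G W x, ∀ v ∈ gProjSet G W y,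
      θ ≤ ((hatG G 𝓗 W).dist u v : ℝ)) :
    ∃ (u v : V), u ∈ W ∧ v ∈ W ∧
      ∃ γ : (hatG G 𝓗 W).Walk u v, ((γ.length : ℝ) < θ) ∧
        ((j:ℝ) - (i:ℝ) - 2*Eval δ K θ ≤ (G.dist u v : ℝ)) ∧
        ((G.dist x u : ℝ) ≤ (i:ℝ) + Eval δ K θ) ∧
        ((G.dist v y : ℝ) ≤ (r₀.length : ℝ) - (j:ℝ) + Eval δ K θ) := by
  push_neg at hbad
  obtain ⟨u, hu, v, hv, hd⟩ := hbad
  obtain ⟨huW, humin⟩ := gProjSet_mem hu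
  obtain ⟨hvW, hvmin⟩ := gProjSet_mem hv
  obtain ⟨γ, hγ⟩ := (hat_reachable hconn hW (fun h => hFS.connected W h)
    huW hvW).exists_walk_length_eq_dist
  refine ⟨u, v, huW, hvW, γ, ?_, ?_, ?_, ?_⟩
  · rw [hγ]; exact hd
  · -- distance lower bound
    have posi : G.dist x (r₀.getVert i) = i := geodesic_dist_getVert r₀ hr₀ (hij.trans hj)
    have posj : G.dist (r₀.getVert j) y = r₀.length - j := geodesic_getVert_dist_end r₀ hr₀ hj
    have hxu : G.dist x u ≤ i + G.dist (r₀.getVert i) aw := by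
      have h1 := humin aw haw
      have h2 : G.dist x aw ≤ G.dist x (r₀.getVert i) + G.dist (r₀.getVert i) aw :=
        hconn.dist_triangle
      omega
    have hyv : G.dist y v ≤ (r₀.length - j) + G.dist (r₀.getVert j) bw := by
      have h1 := hvmin bw hbw
      have h2 : G.dist y bw ≤ G.dist y (r₀.getVert j) + G.dist (r₀.getVert j) bw :=
        hconn.dist_triangle
      have h3 : G.dist y (r₀.getVert j) = r₀.length - j := by
        rw [SimpleGraph.dist_comm]; exact posj
      omega
    have htri : G.dist x y ≤ G.dist x u + (G.dist u v + G.dist v y) := by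
      have t1 : G.dist x y ≤ G.dist x u + G.dist u y := hconn.dist_triangle
      have t2 : G.dist u y ≤ G.dist u v + G.dist v y := hconn.dist_triangle
      omega
    have hcast1 : ((r₀.length - j : ℕ) : ℝ) = (r₀.length : ℝ) - (j : ℝ) := by
      rw [Nat.cast_sub hj]
    have c1 : (G.dist x u : ℝ) ≤ (i:ℝ) + (G.dist (r₀.getVert i) aw : ℝ) := by
      exact_mod_cast hxu
    have c2 : (G.dist y v : ℝ) ≤ ((r₀.length - j : ℕ) : ℝ) + (G.dist (r₀.getVert j) bw : ℝ) := by
      exact_mod_cast hyv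
    have c3 : (G.dist x y : ℝ) ≤ (G.dist x u : ℝ) + ((G.dist u v : ℝ) + (G.dist y v : ℝ)) := by
      rw [SimpleGraph.dist_comm (u := y) (v := v)]
      exact_mod_cast htri
    have c4 : ((r₀.length : ℕ) : ℝ) = (G.dist x y : ℝ) := by exact_mod_cast hr₀
    rw [hcast1] at c2
    linarith
  · have posi : G.dist x (r₀.getVert i) = i := geodesic_dist_getVert r₀ hr₀ (hij.trans hj)
    have hxu : G.dist x u ≤ i + G.dist (r₀.getVert i) aw := by
      have h1 := humin aw haw
      have h2 : G.dist x aw ≤ G.dist x (r₀.getVert i) + G.dist (r₀.getVert i) aw :=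
        hconn.dist_triangle
      omega
    have := (Nat.cast_le (α := ℝ)).mpr hxu
    push_cast at this
    linarith
  · have posj : G.dist (r₀.getVert j) y = r₀.length - j := geodesic_getVert_dist_end r₀ hr₀ hj
    have hyv : G.dist y v ≤ (r₀.length - j) + G.dist (r₀.getVert j) bw := by
      have h1 := hvmin bw hbw
      have h2 : G.dist y bw ≤ G.dist y (r₀.getVert j) + G.dist (r₀.getVert j) bw :=
        hconn.dist_triangle
      have h3 : G.dist y (r₀.getVert j) = r₀.length - j := by
        rw [SimpleGraph.dist_comm]; exact posj
      omega
    have := (Nat.cast_le (α := ℝ)).mpr hyv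
    rw [SimpleGraph.dist_comm (u := y) (v := v)] at this
    push_cast [Nat.cast_sub hj] at this
    linarith

set_option maxHeartbeats 2000000 in
lemma main_induction (hδ : 0 < δ) (hθ : 0 < θ) (hconn : G.Connected)
    (hhyp : GraphHyperbolic G δ) (hFS : FactorSystem G 𝓗 K c ξ B)
    {x y : V} (r₀ : G.Walk x y) (hr₀ : r₀.length = G.dist x y) :
    ∀ (n : ℕ), ∀ (W : Set V), (W ∈ 𝓗 ∨ W = Set.univ) → heightBound 𝓗 n W →
      ∀ (i j : ℕ), i ≤ j → j ≤ r₀.length →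
      ∀ (aw bw : V), aw ∈ W → bw ∈ W →
        (G.dist (r₀.getVert i) aw : ℝ) ≤ Eval δ K θ →
        (G.dist (r₀.getVert j) bw : ℝ) ≤ Eval δ K θ →
        Tfun δ K θ n ≤ (j:ℝ) - (i:ℝ) →
        ∃ W' : Set V, (W' ∈ 𝓗 ∨ W' = Set.univ) ∧
          ∀ u ∈ gProjSet G W' x, ∀ v ∈ gProjSet G W' y,
            θ ≤ ((hatG G 𝓗 W').dist u v : ℝ) := by
  have hE := Eval_pos (K := K) hδ hθ
  have hR := Rval_pos hδ hθ
  have hQ := Qval_pos (K := max K 0) hδ (le_max_right K 0)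
  intro n
  induction n with
  | zero =>
    intro W hW hhb i j hij hj aw bw haw hbw hia hjb hbig
    by_cases hgood : ∀ u ∈ gProjSet G W x, ∀ v ∈ gProjSet G W y,
      θ ≤ ((hatG G 𝓗 W).dist u v : ℝ)
    · exact ⟨W, hW, hgood⟩
    obtain ⟨u, v, huW, hvW, γ, hγθ, hDlow, hxu, hvy⟩ :=
      prelude hθ hconn hFS r₀ hr₀ hW hij hj haw hbw hia hjb hgood
    exfalso
    have h1 : G.dist u v ≤ γ.length := hat_walk_to_G γ (heightBound_zero hhb)
    have h2 : (G.dist u v : ℝ) ≤ (γ.length : ℝ) := by exact_mod_cast h1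
    have h3 : Tfun δ K θ 0 = θ + 2*Eval δ K θ + 6*δ + 10 := rfl
    linarith
  | succ n₀ IH =>
    intro W hW hhb i j hij hj aw bw haw hbw hia hjb hbig
    classical
    by_cases hgood : ∀ u ∈ gProjSet G W x, ∀ v ∈ gProjSet G W y,
      θ ≤ ((hatG G 𝓗 W).dist u v : ℝ)
    · exact ⟨W, hW, hgood⟩
    obtain ⟨u, v, huW, hvW, γ, hγθ, hDlow, hxu, hvy⟩ :=
      prelude hθ hconn hFS r₀ hr₀ hW hij hj haw hbw hia hjb hgood
    have hTge := Tfun_ge (K := K) hδ hθ (n₀+1)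
    -- γ is nonempty
    have hn'1 : 1 ≤ γ.length := by
      by_contra h
      have h0 : γ.length = 0 := by omega
      have huv : u = v := γ.eq_of_length_eq_zero h0
      have : G.dist u v = 0 := by rw [huv, SimpleGraph.dist_self]
      rw [this] at hDlow
      simp at hDlow
      linarith
    -- geodesics
    obtain ⟨r₁, hr₁⟩ := (hconn u v).exists_walk_length_eq_dist
    obtain ⟨gxu, hgxu⟩ := (hconn x u).exists_walk_length_eq_dist
    obtain ⟨gvy, hgvy⟩ := (hconn v y).exists_walk_length_eq_dist
    -- outer covering: the broken geodesic x -- u -- v -- y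
    set cs3 : ℕ → V := fun t => match t with | 0 => x | 1 => u | 2 => v | _ => y with hcs3
    set S3 : ℕ → Set V := fun t => match t with
      | 0 => {z | z ∈ gxu.support} | 1 => {z | z ∈ r₁.support} | _ => {z | z ∈ gvy.support}
      with hS3
    have houter := broken (le_of_lt hδ) hconn hhyp 3 (by norm_num) cs3 S3 ?_ r₀ hr₀
    rotate_left
    · intro t ht
      interval_cases t
      · exact ⟨gxu, hgxu, fun z hz => hz⟩
      · exact ⟨r₁, hr₁, fun z hz => hz⟩
      · exact ⟨gvy, hgvy, fun z hz => hz⟩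
    -- classification of the edges of γ
    set Cone : ℕ → Prop := fun i' => ∃ U, U ∈ 𝓗 ∧ U ⊂ W ∧
      γ.getVert i' ∈ U ∧ γ.getVert (i'+1) ∈ U with hCone
    set Ufun : ℕ → Set V := fun i' => if h : Cone i' then h.choose else ∅ with hUfun
    have hUspec : ∀ i', Cone i' → Ufun i' ∈ 𝓗 ∧ Ufun i' ⊂ W ∧
        γ.getVert i' ∈ Ufun i' ∧ γ.getVert (i'+1) ∈ Ufun i' := by
      intro i' h
      rw [hUfun]
      simp only [dif_pos h]
      exact h.choose_spec
    set Sfun : ℕ → Set V := fun i' => if Cone i' then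
        {z | ∃ w ∈ Ufun i', (G.dist z w : ℝ) ≤ Qval δ (max K 0)}
      else {γ.getVert i', γ.getVert (i'+1)} with hSfunDef
    have hGadjOf : ∀ i' < γ.length, ¬ Cone i' → G.Adj (γ.getVert i') (γ.getVert (i'+1)) := by
      intro i' hi' hc
      have hadj := γ.adj_getVert_succ hi'
      rcases hadj.2.2 with h | ⟨_, U', h1, h2, h3, h4⟩
      · exact h
      · exact absurd ⟨U', h1, h2, h3, h4⟩ hc
    have hSfun : ∀ i' < γ.length, ∃ p : G.Walk (γ.getVert i') (γ.getVert (i'+1)),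
        p.length = G.dist (γ.getVert i') (γ.getVert (i'+1)) ∧ ∀ z ∈ p.support, z ∈ Sfun i' := by
      intro i' hi'
      by_cases hc : Cone i'
      · obtain ⟨hU𝓗, hUW, hmem1, hmem2⟩ := hUspec i' hc
        obtain ⟨P, hPQG, hPsup⟩ := exists_QG_walk (K := max K 0) (hFS.connected _ hU𝓗)
          (fun a' b' ha' hb' => by
            have h1 := hFS.qie _ hU𝓗 a' b' ha' hb'
            have h2 : (0:ℝ) ≤ (G.dist a' b' : ℝ) := Nat.cast_nonneg _
            have h3 : K ≤ max K 0 := le_max_left K 0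
            nlinarith) hmem1 hmem2
        obtain ⟨g, hg⟩ := (hconn (γ.getVert i') (γ.getVert (i'+1))).exists_walk_length_eq_dist
        refine ⟨g, hg, fun z hz => ?_⟩
        obtain ⟨w, hwP, hd⟩ := morse hδ hconn hhyp (le_max_right K 0) P hPQG g hg z hz
        rw [hSfunDef]
        simp only [if_pos hc]
        exact ⟨w, hPsup w hwP, hd⟩
      · have hGadj := hGadjOf i' hi' hc
        refine ⟨Walk.cons hGadj Walk.nil, ?_, ?_⟩
        · have hle : G.dist (γ.getVert i') (γ.getVert (i'+1)) ≤ 1 :=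
            SimpleGraph.dist_le (Walk.cons hGadj Walk.nil)
          have hne : G.dist (γ.getVert i') (γ.getVert (i'+1)) ≠ 0 :=
            fun h0 => hGadj.ne (hconn.dist_eq_zero_iff.mp h0)
          simp only [Walk.length_cons, Walk.length_nil]
          omega
        · intro z hz
          simp only [Walk.support_cons, Walk.support_nil, List.mem_cons,
            List.mem_singleton] at hz
          rw [hSfunDef]
          simp only [if_neg hc]
          rcases hz with h | h | h
          · exact Or.inl h
          · exact Or.inr h
          · exact absurd h (by simp)
    -- inner covering of the geodesic r₁ by the pieces of γ
    have hinner := broken (le_of_lt hδ) hconn hhyp γ.length hn'1 (fun t => γ.getVert t) Sfun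
      hSfun (r₁.copy (γ.getVert_zero).symm (γ.getVert_length).symm)
      (by rw [Walk.length_copy, hr₁]; congr 1 <;> [exact (γ.getVert_zero).symm;
        exact (γ.getVert_length).symm])
    -- margins
    set mE : ℕ := ⌈Eval δ K θ + 3*δ⌉₊ with hmEdef
    have hmE1 : Eval δ K θ + 3*δ ≤ (mE:ℝ) := Nat.le_ceil _
    have hmE2 : (mE:ℝ) < Eval δ K θ + 3*δ + 1 := Nat.ceil_lt_add_one (by positivity)
    have hjlow : i + 2*mE + 4 ≤ j := by
      have hr1 : ((i + 2*mE + 4 : ℕ) : ℝ) < (j:ℝ) := by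
        push_cast
        linarith
      exact_mod_cast hr1.le
    set lo : ℕ := i + mE + 1 with hlodef
    set hi : ℕ := j - (mE + 1) with hhidef
    have hlohi : lo + 3 ≤ hi + 1 := by
      simp only [hlodef, hhidef]
      omega
    have hhir : (hi:ℝ) = (j:ℝ) - (mE:ℝ) - 1 := by
      rw [hhidef]
      push_cast [Nat.cast_sub (show mE + 1 ≤ j by omega)]
      ring
    have hhilen : hi ≤ r₀.length := by omega
    -- covering of the middle of r₀ by the cone pieces
    have hcover : ∀ m ∈ Finset.Icc lo hi, ∃ i' < γ.length, ∃ w ∈ Sfun i',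
        (G.dist (r₀.getVert m) w : ℝ) ≤ Rval δ θ := by
      intro m hm
      rw [Finset.mem_Icc] at hm
      have hmlen : m ≤ r₀.length := le_trans hm.2 hhilen
      have hzsup : r₀.getVert m ∈ r₀.support :=
        Walk.mem_support_iff_exists_getVert.mpr ⟨m, rfl, hmlen⟩
      obtain ⟨t, ht, w₁, hw₁, hd1⟩ := houter (r₀.getVert m) hzsup
      have posm : G.dist x (r₀.getVert m) = m := geodesic_dist_getVert r₀ hr₀ hmlen
      have posm' : G.dist (r₀.getVert m) y = r₀.length - m :=
        geodesic_getVert_dist_end r₀ hr₀ hmlen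
      have hd1' : (G.dist (r₀.getVert m) w₁ : ℝ) ≤ 3*δ := by
        have : ((3:ℕ):ℝ) = 3 := by norm_num
        calc (G.dist (r₀.getVert m) w₁ : ℝ) ≤ δ * (3:ℕ) := hd1
          _ = 3*δ := by push_cast; ring
      interval_cases t
      · exfalso
        have hw₁s : w₁ ∈ gxu.support := hw₁
        have h4 : G.dist x w₁ ≤ G.dist x u := by
          have := dist_start_of_mem_support gxu hw₁s
          rwa [hgxu] at this
        have h5 : G.dist x (r₀.getVert m) ≤ G.dist x w₁ + G.dist w₁ (r₀.getVert m) :=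
          hconn.dist_triangle
        have h6 : (m:ℝ) ≤ (i:ℝ) + Eval δ K θ + 3*δ := by
          have c4 : (G.dist x w₁ : ℝ) ≤ (G.dist x u : ℝ) := by exact_mod_cast h4
          have c5 : (G.dist x (r₀.getVert m) : ℝ) ≤ (G.dist x w₁ : ℝ) +
              (G.dist w₁ (r₀.getVert m) : ℝ) := by exact_mod_cast h5
          have c5' : ((G.dist x (r₀.getVert m) : ℕ) : ℝ) = (m:ℝ) := by exact_mod_cast posm
          have c6 : (G.dist w₁ (r₀.getVert m) : ℝ) = (G.dist (r₀.getVert m) w₁ : ℝ) := by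
            rw [SimpleGraph.dist_comm]
          linarith
        have h7 : (lo:ℝ) ≤ (m:ℝ) := by exact_mod_cast hm.1
        have h8 : (lo:ℝ) = (i:ℝ) + (mE:ℝ) + 1 := by rw [hlodef]; push_cast; ring
        linarith
      · have hw₁s : w₁ ∈ r₁.support := hw₁
        have hw₁' : w₁ ∈ (r₁.copy (γ.getVert_zero).symm (γ.getVert_length).symm).support := by
          rw [Walk.support_copy]; exact hw₁s
        obtain ⟨i', hi', w₂, hw₂, hd2⟩ := hinner w₁ hw₁'
        refine ⟨i', hi', w₂, hw₂, ?_⟩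
        have htri : (G.dist (r₀.getVert m) w₂ : ℝ) ≤
            (G.dist (r₀.getVert m) w₁ : ℝ) + (G.dist w₁ w₂ : ℝ) := by
          exact_mod_cast hconn.dist_triangle
        have hd2' : (G.dist w₁ w₂ : ℝ) ≤ δ * θ := by
          have hγθ' : (γ.length : ℝ) ≤ θ := le_of_lt hγθ
          have h9 : δ * (γ.length:ℝ) ≤ δ * θ := mul_le_mul_of_nonneg_left hγθ' hδ.le
          linarith
        rw [show Rval δ θ = 3*δ + δ*θ from rfl]
        linarith
      · exfalso
        have hw₁s : w₁ ∈ gvy.support := hw₁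
        have h4 : G.dist w₁ y ≤ G.dist v y := by
          have := dist_end_of_mem_support gvy hw₁s
          rwa [hgvy] at this
        have h5 : G.dist (r₀.getVert m) y ≤ G.dist (r₀.getVert m) w₁ + G.dist w₁ y :=
          hconn.dist_triangle
        have hcast : ((r₀.length - m : ℕ):ℝ) = (r₀.length:ℝ) - m := Nat.cast_sub hmlen
        have h6 : (r₀.length:ℝ) - (m:ℝ) ≤ 3*δ + ((r₀.length:ℝ) - (j:ℝ) + Eval δ K θ) := by
          have c4 : (G.dist w₁ y : ℝ) ≤ (G.dist v y : ℝ) := by exact_mod_cast h4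
          have c5 : ((r₀.length - m : ℕ):ℝ) ≤ (G.dist (r₀.getVert m) w₁ : ℝ) +
              (G.dist w₁ y : ℝ) := by
            rw [← posm']; exact_mod_cast h5
          rw [hcast] at c5
          linarith
        have h7 : (m:ℝ) ≤ (hi:ℝ) := by exact_mod_cast hm.2
        linarith
    -- pigeonhole over the pieces
    set f : ℕ → ℕ := fun m => if h : ∃ i', i' < γ.length ∧ ∃ w ∈ Sfun i',
        (G.dist (r₀.getVert m) w : ℝ) ≤ Rval δ θ then h.choose else 0 with hfdef
    have hfspec : ∀ m ∈ Finset.Icc lo hi, f m < γ.length ∧ ∃ w ∈ Sfun (f m),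
        (G.dist (r₀.getVert m) w : ℝ) ≤ Rval δ θ := by
      intro m hm
      obtain ⟨i', hi', w, hw, hd⟩ := hcover m hm
      have hex : ∃ i'', i'' < γ.length ∧ ∃ w ∈ Sfun i'',
          (G.dist (r₀.getVert m) w : ℝ) ≤ Rval δ θ := ⟨i', hi', w, hw, hd⟩
      have : f m = hex.choose := by rw [hfdef]; exact dif_pos hex
      rw [this]
      exact hex.choose_spec
    -- abstract away the construction details before the counting argument
    have hSpos : ∀ i'', Cone i'' → ∀ z ∈ Sfun i'', ∃ w ∈ Ufun i'',
        (G.dist z w : ℝ) ≤ Qval δ (max K 0) := by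
      intro i'' hcc z hzS
      rw [hSfunDef] at hzS
      simpa [if_pos hcc] using hzS
    have hSneg : ∀ i'', ¬ Cone i'' → ∀ z ∈ Sfun i'',
        z = γ.getVert i'' ∨ z = γ.getVert (i''+1) := by
      intro i'' hcc z hzS
      rw [hSfunDef] at hzS
      simpa [if_neg hcc] using hzS
    clear hSfun hinner houter hcover hSfunDef hfdef hUfun hcs3 hS3 hCone
    clear_value Sfun f Ufun Cone cs3 S3
    set b : ℕ := ⌈Tfun δ K θ n₀ + 2*Rval δ θ + 10⌉₊ with hbdef
    have hTn₀ := Tfun_ge (K := K) hδ hθ n₀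
    have hb1 : Tfun δ K θ n₀ + 2*Rval δ θ + 10 ≤ (b:ℝ) := Nat.le_ceil _
    have hb2 : (b:ℝ) < Tfun δ K θ n₀ + 2*Rval δ θ + 11 := by
      have := Nat.ceil_lt_add_one (show (0:ℝ) ≤ Tfun δ K θ n₀ + 2*Rval δ θ + 10 by nlinarith)
      linarith
    have hpig : ∃ i' ∈ Finset.range γ.length, b ≤ ((Finset.Icc lo hi).filter
        (fun m => f m = i')).card := by
      refine Finset.exists_le_card_fiber_of_mul_le_card_of_maps_to
        (fun m hm => Finset.mem_range.mpr (hfspec m hm).1) ⟨0, Finset.mem_range.mpr hn'1⟩ ?_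
      rw [Finset.card_range, Nat.card_Icc]
      have hcard : ((hi + 1 - lo : ℕ) : ℝ) = (hi:ℝ) + 1 - lo := by
        push_cast [Nat.cast_sub (show lo ≤ hi + 1 by omega)]
        ring
      have hreal : ((γ.length * b : ℕ) : ℝ) ≤ ((hi + 1 - lo : ℕ) : ℝ) := by
        have e1 : (γ.length : ℝ) * b ≤ θ * b :=
          mul_le_mul_of_nonneg_right (le_of_lt hγθ) (Nat.cast_nonneg b)
        have e2 : θ * (b:ℝ) ≤ θ * (Tfun δ K θ n₀ + 2*Rval δ θ + 11) :=
          mul_le_mul_of_nonneg_left hb2.le hθ.le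
        have e3 : (hi:ℝ) + 1 - lo = (j:ℝ) - (i:ℝ) - 2*(mE:ℝ) - 1 := by
          rw [hhir, hlodef]
          push_cast
          ring
        have e4 : Tfun δ K θ (n₀+1) ≤ (j:ℝ) - i := hbig
        have e5 : Tfun δ K θ (n₀+1) =
            (θ+1)*(Tfun δ K θ n₀ + 2*Rval δ θ + 12) + θ + 2*Eval δ K θ + 6*δ + 10 := rfl
        have e7 : (θ+1)*(Tfun δ K θ n₀ + 2*Rval δ θ + 12) =
            θ*(Tfun δ K θ n₀ + 2*Rval δ θ + 11) + (Tfun δ K θ n₀ + 2*Rval δ θ + 12 + θ) := by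
          ring
        have e8 : 0 ≤ Tfun δ K θ n₀ + 2*Rval δ θ + 12 + θ := by linarith
        have e9 : ((γ.length * b : ℕ):ℝ) = (γ.length:ℝ)*(b:ℝ) := by push_cast; ring
        rw [e9, hcard, e3]
        linarith
      exact_mod_cast hreal
    obtain ⟨i', hi'mem, hfib⟩ := hpig
    have hi'len : i' < γ.length := Finset.mem_range.mp hi'mem
    set F : Finset ℕ := (Finset.Icc lo hi).filter (fun m => f m = i') with hFdef
    have hFne : F.Nonempty := by
      rw [← Finset.card_pos]
      have : 1 ≤ b := by
        have : (1:ℝ) ≤ (b:ℝ) := by nlinarith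
        exact_mod_cast this
      omega
    have hFmem : ∀ m ∈ F, m ∈ Finset.Icc lo hi ∧ f m = i' := by
      intro m hm
      rw [hFdef] at hm
      exact Finset.mem_filter.mp hm
    set m1 : ℕ := F.min' hFne with hm1def
    set m2 : ℕ := F.max' hFne with hm2def
    have hm1F : m1 ∈ F := F.min'_mem hFne
    have hm2F : m2 ∈ F := F.max'_mem hFne
    have hm12 : m1 ≤ m2 := F.min'_le m2 hm2F
    obtain ⟨hm1I, hf1⟩ := hFmem m1 hm1F
    obtain ⟨hm2I, hf2⟩ := hFmem m2 hm2F
    rw [Finset.mem_Icc] at hm1I hm2I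
    have hm2len : m2 ≤ r₀.length := le_trans hm2I.2 hhilen
    have hcard2 : F.card ≤ m2 - m1 + 1 := by
      have hsub : F ⊆ Finset.Icc m1 m2 := fun m hm =>
        Finset.mem_Icc.mpr ⟨F.min'_le m hm, F.le_max' m hm⟩
      have h10 := Finset.card_le_card hsub
      rw [Nat.card_Icc] at h10
      omega
    have hgap : Tfun δ K θ n₀ + 2*Rval δ θ + 8 ≤ (m2:ℝ) - (m1:ℝ) := by
      have c1 : (b:ℝ) ≤ ((m2 - m1 + 1 : ℕ):ℝ) := by
        exact_mod_cast le_trans hfib hcard2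
      have c2 : ((m2 - m1 + 1 : ℕ):ℝ) = (m2:ℝ) - m1 + 1 := by
        push_cast [Nat.cast_sub hm12]
        ring
      rw [c2] at c1
      linarith
    -- get the two witnesses
    obtain ⟨w1, hw1S, hdz1⟩ := (hfspec m1 (Finset.mem_Icc.mpr hm1I)).2
    obtain ⟨w2, hw2S, hdz2⟩ := (hfspec m2 (Finset.mem_Icc.mpr hm2I)).2
    rw [hf1] at hw1S
    rw [hf2] at hw2S
    by_cases hc : Cone i'
    · -- the recursion case: descend into the factor U = Ufun i'
      obtain ⟨hU𝓗, hUW, _, _⟩ := hUspec i' hc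
      obtain ⟨a', ha'U, hwa'⟩ := hSpos i' hc w1 hw1S
      obtain ⟨b', hb'U, hwb'⟩ := hSpos i' hc w2 hw2S
      have hda : (G.dist (r₀.getVert m1) a' : ℝ) ≤ Eval δ K θ := by
        have t1 : (G.dist (r₀.getVert m1) a' : ℝ) ≤
            (G.dist (r₀.getVert m1) w1 : ℝ) + (G.dist w1 a' : ℝ) := by
          exact_mod_cast hconn.dist_triangle
        have hEe : Eval δ K θ = Rval δ θ + Qval δ (max K 0) + 1 := rfl
        linarith
      have hdb : (G.dist (r₀.getVert m2) b' : ℝ) ≤ Eval δ K θ := by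
        have t1 : (G.dist (r₀.getVert m2) b' : ℝ) ≤
            (G.dist (r₀.getVert m2) w2 : ℝ) + (G.dist w2 b' : ℝ) := by
          exact_mod_cast hconn.dist_triangle
        have hEe : Eval δ K θ = Rval δ θ + Qval δ (max K 0) + 1 := rfl
        linarith
      exact IH (Ufun i') (Or.inl hU𝓗) (heightBound_descend hhb hU𝓗 hUW) m1 m2 hm12 hm2len
        a' b' ha'U hb'U hda hdb (by linarith)
    · -- impossible: an edge class cannot have a large fiber
      exfalso
      have hGadj := hGadjOf i' hi'len hc
      have hpos : G.dist (r₀.getVert m1) (r₀.getVert m2) = m2 - m1 :=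
        geodesic_getVert_dist r₀ hr₀ hm12 hm2len
      have hw12 : G.dist w1 w2 ≤ 1 := by
        have hadj1 : G.dist (γ.getVert i') (γ.getVert (i'+1)) ≤ 1 :=
          SimpleGraph.dist_le (Walk.cons hGadj Walk.nil)
      -- both w1 and w2 are endpoints of the same edge
        rcases hSneg i' hc w1 hw1S with h1 | h1 <;>
          rcases hSneg i' hc w2 hw2S with h2 | h2 <;>
          subst h1 <;> subst h2 <;>
          simp [SimpleGraph.dist_self, SimpleGraph.dist_comm, hadj1]
      have htri : G.dist (r₀.getVert m1) (r₀.getVert m2) ≤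
          G.dist (r₀.getVert m1) w1 + G.dist w1 w2 + G.dist w2 (r₀.getVert m2) := by
        have t1 : G.dist (r₀.getVert m1) (r₀.getVert m2) ≤
            G.dist (r₀.getVert m1) w1 + G.dist w1 (r₀.getVert m2) := hconn.dist_triangle
        have t2 : G.dist w1 (r₀.getVert m2) ≤ G.dist w1 w2 + G.dist w2 (r₀.getVert m2) :=
          hconn.dist_triangle
        omega
      have hcm : (G.dist w2 (r₀.getVert m2) : ℝ) = (G.dist (r₀.getVert m2) w2 : ℝ) := by
        rw [SimpleGraph.dist_comm]
      have hreal2 : (m2:ℝ) - m1 ≤ Rval δ θ + 1 + Rval δ θ := by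
        have c1 : ((m2 - m1 : ℕ):ℝ) = (m2:ℝ) - m1 := Nat.cast_sub hm12
        have c2 : (G.dist (r₀.getVert m1) (r₀.getVert m2) : ℝ) ≤
            (G.dist (r₀.getVert m1) w1 : ℝ) + (G.dist w1 w2 : ℝ) +
            (G.dist w2 (r₀.getVert m2) : ℝ) := by exact_mod_cast htri
        have c3 : (G.dist w1 w2 : ℝ) ≤ 1 := by exact_mod_cast hw12
        have c4 : ((G.dist (r₀.getVert m1) (r₀.getVert m2) : ℕ):ℝ) = (m2:ℝ) - m1 := by
          rw [hpos]; exact c1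
        linarith
      linarith




end MainLemma

end FSAux

/-- Proposition 3.15, uniqueness axiom: far-apart points of `Γ` are
far apart in some coned-off space `V̂`, `V ∈ 𝓗 ∪ {Γ}`. -/
theorem uniqueness_axiom : ∀ (δ K : ℝ) (c : ℕ) (ξ B : ℝ) (θ : ℝ),
    0 < δ → 0 < θ → ∃ T : ℝ,
    ∀ (V : Type u) (G : SimpleGraph V) (𝓗 : Set (Set V)),
      G.Connected → GraphHyperbolic G δ → FactorSystem G 𝓗 K c ξ B →
      ∀ x y : V, T ≤ (G.dist x y : ℝ) →
        ∃ W : Set V, (W ∈ 𝓗 ∨ W = Set.univ) ∧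
          ∀ u ∈ gProjSet G W x, ∀ v ∈ gProjSet G W y,
            θ ≤ ((hatG G 𝓗 W).dist u v : ℝ) := by
  intro δ K c ξ B θ hδ hθ
  refine ⟨FSAux.Tfun δ K θ c + 1, ?_⟩
  intro V G 𝓗 hconn hhyp hFS x y hxy
  obtain ⟨r₀, hr₀⟩ := (hconn x y).exists_walk_length_eq_dist
  have hhb : FSAux.heightBound 𝓗 c Set.univ := fun m f hf hch _ => hFS.chains m f hf hch
  have hE := FSAux.Eval_pos (K := K) hδ hθ
  have h0 : (G.dist (r₀.getVert 0) x : ℝ) ≤ FSAux.Eval δ K θ := by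
    rw [r₀.getVert_zero, SimpleGraph.dist_self]
    exact_mod_cast hE.le
  have h1 : (G.dist (r₀.getVert r₀.length) y : ℝ) ≤ FSAux.Eval δ K θ := by
    rw [r₀.getVert_length, SimpleGraph.dist_self]
    exact_mod_cast hE.le
  have h2 : FSAux.Tfun δ K θ c ≤ (r₀.length : ℝ) - (0:ℕ) := by
    have : (r₀.length : ℝ) = (G.dist x y : ℝ) := by exact_mod_cast hr₀
    push_cast
    linarith
  exact FSAux.main_induction hδ hθ hconn hhyp hFS r₀ hr₀ c Set.univ (Or.inr rfl) hhb
    0 r₀.length (Nat.zero_le _) le_rfl x y (Set.mem_univ x) (Set.mem_univ y) h0 h1 h2
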